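/- arXiv:1912.02375 — 2 statements merged into one kernel-verified Lean document; each statement's English description precedes it below -/
import Mathlib

section
/- Let r be a positive integer and let w be an integer with 0 ≤ w ≤ r. Then the graph I_{r−w} ∨ r^{r−w}·K_{w+1} (the join of the edgeless graph on r−w vertices with the disjoint union of r^{r−w} copies of the complete graph K_{w+1}) is not r-choosable. -/
open Filter

noncomputable section

/-- `G` has a nonempty subgraph of minimum degree at least `r`. -/
def HasSubMinDeg {V : Type} (G : SimpleGraph V) (r : ℕ) : Prop :=
  ∃ R : G.Subgraph, R.verts.Nonempty ∧ ∀ v ∈ R.verts, r ≤ (R.neighborSet v).ncard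

/-- `G` is `d`-degenerate: it has no subgraph of minimum degree at least `d+1`. -/
def IsDegen {V : Type} (G : SimpleGraph V) (d : ℕ) : Prop :=
  ¬ HasSubMinDeg G (d + 1)

/-- `G` has a nonempty `r`-regular subgraph. -/
def HasRegSub {V : Type} (G : SimpleGraph V) (r : ℕ) : Prop :=
  ∃ R : G.Subgraph, R.verts.Nonempty ∧ ∀ v ∈ R.verts, (R.neighborSet v).ncard = r

/-- `G` is `r`-choosable. -/
def Choosable {V : Type} (G : SimpleGraph V) (r : ℕ) : Prop :=
  ∀ L : V → Finset ℕ, (∀ v, r ≤ (L v).card) →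
    ∃ c : V → ℕ, (∀ v, c v ∈ L v) ∧ ∀ ⦃u w⦄, G.Adj u w → c u ≠ c w

/-- `H` is a minor of `G`: there are disjoint nonempty connected branch sets,
one for each vertex of `H`, with edges of `H` realized by edges of `G`. -/
def IsMinorOf {W V : Type} (H : SimpleGraph W) (G : SimpleGraph V) : Prop :=
  ∃ B : W → Set V,
    (∀ w, (B w).Nonempty) ∧
    (∀ ⦃w w'⦄, w ≠ w' → Disjoint (B w) (B w')) ∧
    (∀ w, (G.induce (B w)).Connected) ∧
    ∀ ⦃w w'⦄, H.Adj w w' → ∃ u ∈ B w, ∃ x ∈ B w', G.Adj u x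

/-- `G` contains a subgraph isomorphic to `H`. -/
def IsSubCopyOf {W V : Type} (H : SimpleGraph W) (G : SimpleGraph V) : Prop :=
  ∃ f : W ↪ V, ∀ ⦃a b⦄, H.Adj a b → G.Adj (f a) (f b)

/-- The join `G ∨ H` of two graphs. -/
def gJoin {V W : Type} (G : SimpleGraph V) (H : SimpleGraph W) : SimpleGraph (V ⊕ W) where
  Adj x y :=
    match x, y with
    | Sum.inl a, Sum.inl b => G.Adj a b
    | Sum.inr a, Sum.inr b => H.Adj a b
    | Sum.inl _, Sum.inr _ => True
    | Sum.inr _, Sum.inl _ => True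
  symm := by
    constructor
    rintro (a | a) (b | b) h
    · exact G.adj_symm h
    · trivial
    · trivial
    · exact H.adj_symm h
  loopless := by
    constructor
    rintro (a | a) h
    · exact G.irrefl h
    · exact H.irrefl h

/-- The disjoint union `tG` of `t` copies of `G`. -/
def gCopies {V : Type} (t : ℕ) (G : SimpleGraph V) : SimpleGraph (Fin t × V) where
  Adj x y := x.1 = y.1 ∧ G.Adj x.2 y.2
  symm := by
    constructor
    rintro x y ⟨h1, h2⟩
    exact ⟨h1.symm, h2.symm⟩
  loopless := by
    constructor
    rintro x ⟨-, h⟩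
    exact G.irrefl h

/-- The graph `G ∧_k Z`, obtained from `k` disjoint copies of `G` by identifying
the `k` copies of each vertex of `Z`. -/
def wedgePow {V : Type} (G : SimpleGraph V) (Z : Set V) (k : ℕ) :
    SimpleGraph (↥Z ⊕ (Fin k × ↥(Zᶜ : Set V))) where
  Adj x y :=
    match x, y with
    | Sum.inl z, Sum.inl z' => G.Adj z.1 z'.1
    | Sum.inl z, Sum.inr p => G.Adj z.1 p.2.1
    | Sum.inr p, Sum.inl z => G.Adj p.2.1 z.1
    | Sum.inr p, Sum.inr q => p.1 = q.1 ∧ G.Adj p.2.1 q.2.1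
  symm := by
    constructor
    rintro (z | p) (z' | q) h
    · exact h.symm
    · exact h.symm
    · exact h.symm
    · exact ⟨h.1.symm, h.2.symm⟩
  loopless := by
    constructor
    rintro (z | p) h
    · exact G.irrefl h
    · exact G.irrefl h.2

/-- `G` is (isomorphic to) the graph obtained from `W` by adding isolated vertices. -/
def ExtIsolated {VW V : Type} (W : SimpleGraph VW) (G : SimpleGraph V) : Prop :=
  ∃ f : VW ↪ V, (∀ a b, G.Adj (f a) (f b) ↔ W.Adj a b) ∧
    ∀ x y, G.Adj x y → ∃ a b, f a = x ∧ f b = y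

/-- Membership in the family `𝓕(G, F₀, r)`: `F` is obtained from the disjoint union of `G`
and `F₀` by adding edges between the two sides so that every vertex of `F₀` has degree
at least `r`. -/
def InFamF {V W : Type} (G : SimpleGraph V) (F0 : SimpleGraph W) (r : ℕ)
    (F : SimpleGraph (V ⊕ W)) : Prop :=
  (∀ a b, F.Adj (Sum.inl a) (Sum.inl b) ↔ G.Adj a b) ∧
  (∀ a b, F.Adj (Sum.inr a) (Sum.inr b) ↔ F0.Adj a b) ∧
  ∀ w : W, r ≤ (F.neighborSet (Sum.inr w)).ncard

/-- The type of `F ∈ 𝓕(G, F₀, r)`: the number of edges incident with the `F₀`-side. -/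
def typeOfF {V W : Type} (F : SimpleGraph (V ⊕ W)) : ℕ :=
  {e ∈ F.edgeSet | ∃ w : W, (Sum.inr w : V ⊕ W) ∈ e}.ncard

/-- The minimum size of a vertex cover of `H`. -/
def vcNum {V : Type} [Fintype V] (H : SimpleGraph V) : ℕ :=
  sInf {k | ∃ S : Finset V, S.card = k ∧ ∀ ⦃a b⦄, H.Adj a b → a ∈ S ∨ b ∈ S}

/-- `H` has minimum degree at least `r`. -/
def MinDegGE {V : Type} (H : SimpleGraph V) (r : ℕ) : Prop :=
  ∀ v, r ≤ (H.neighborSet v).ncard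

open Classical in
/-- The probability that the random subgraph `G(p)` (each edge kept independently with
probability `p`) satisfies the property `P`. -/
def edgeProb {n : ℕ} (G : SimpleGraph (Fin n)) (p : ℝ)
    (P : SimpleGraph (Fin n) → Prop) : ℝ :=
  ∑ S ∈ (Set.toFinite G.edgeSet).toFinset.powerset,
    if P (SimpleGraph.fromEdgeSet (S : Set (Sym2 (Fin n)))) then
      p ^ S.card * (1 - p) ^ ((Set.toFinite G.edgeSet).toFinset.card - S.card)
    else 0

/-- Condition (1) of the upper-threshold definition. -/
def CondOne (𝒢 : ∀ n : ℕ, Set (SimpleGraph (Fin n)))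
    (P : ∀ n : ℕ, SimpleGraph (Fin n) → Prop) (pstar : ℕ → ℝ) : Prop :=
  ∀ G : (n : ℕ) → SimpleGraph (Fin n), (∀ n, G n ∈ 𝒢 n) →
    ∀ q : ℕ → ℝ, (∀ n, q n ∈ Set.Icc (0 : ℝ) 1) →
      Tendsto (fun n => pstar n / q n) atTop atTop →
      Tendsto (fun n => edgeProb (G n) (q n) (P n)) atTop (nhds 1)

/-- Condition (2) of the upper-threshold definition. -/
def CondTwo (𝒢 : ∀ n : ℕ, Set (SimpleGraph (Fin n)))
    (P : ∀ n : ℕ, SimpleGraph (Fin n) → Prop) (pstar : ℕ → ℝ) : Prop :=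
  ∃ G : (n : ℕ) → SimpleGraph (Fin n), (∀ n, G n ∈ 𝒢 n) ∧
    ∀ q : ℕ → ℝ, (∀ n, q n ∈ Set.Icc (0 : ℝ) 1) →
      Tendsto (fun n => q n / pstar n) atTop atTop →
      Tendsto (fun n => edgeProb (G n) (q n) (P n)) atTop (nhds 0)

/-- `pstar` is an upper threshold for the class `𝒢` and the property `P`. -/
def IsUpperThreshold (𝒢 : ∀ n : ℕ, Set (SimpleGraph (Fin n)))
    (P : ∀ n : ℕ, SimpleGraph (Fin n) → Prop) (pstar : ℕ → ℝ) : Prop :=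
  CondOne 𝒢 P pstar ∧ CondTwo 𝒢 P pstar

/-- The class of `H`-minor-free graphs (on vertex sets `Fin n`). -/
def MClass {W : Type} (H : SimpleGraph W) (n : ℕ) : Set (SimpleGraph (Fin n)) :=
  {G | ¬ IsMinorOf H G}

/-- A `(c,q,r)`-good signature collection for `G`. -/
def GoodSig {V : Type} [Fintype V] (G : SimpleGraph V) (c : ℝ) (q r : ℕ)
    (C : Finset (Finset (Sym2 V))) : Prop :=
  (∀ S ∈ C, S.card = q ∧ (S : Set (Sym2 V)) ⊆ G.edgeSet) ∧
  (C.card : ℝ) ≤ c * (Fintype.card V : ℝ) ∧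
  ∀ R : G.Subgraph, R.verts.Nonempty → (∀ v ∈ R.verts, r ≤ (R.neighborSet v).ncard) →
    ∃ S ∈ C, (S : Set (Sym2 V)) ⊆ R.edgeSet

/-- The class `𝒢` has `(q,r)`-good signature collections. -/
def HasGoodSigs (𝒢 : ∀ n : ℕ, Set (SimpleGraph (Fin n))) (q r : ℕ) : Prop :=
  ∃ c : ℝ, ∀ n : ℕ, ∀ G ∈ 𝒢 n, ∃ C, GoodSig G c q r C

/-- The neighborhood `N_G(S)` of a set of vertices. -/
def setNbhd {V : Type} (G : SimpleGraph V) (S : Set V) : Set V :=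
  {v | v ∉ S ∧ ∃ u ∈ S, G.Adj u v}

/-- The average degree `2|E(G)|/|V(G)|` of a finite graph. -/
def avgDeg {V : Type} [Fintype V] (G : SimpleGraph V) : ℝ :=
  2 * (G.edgeSet.ncard : ℝ) / (Fintype.card V : ℝ)

/-- `N_{G[X]}^{≤ m}[x]`: the vertices reachable from `x` by a walk of length at most `m`
all of whose vertices lie in `X`. -/
def ballIn {V : Type} (G : SimpleGraph V) (X : Set V) (x : V) (m : ℤ) : Set V :=
  {y | ∃ w : G.Walk x y, (∀ z ∈ w.support, z ∈ X) ∧ (w.length : ℤ) ≤ m}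

/-- `G` contains a subgraph isomorphic to an `S`-subdivision of `H`, where `S` is the
set of allowed numbers of subdivisions per edge. -/
def ContainsSubdiv {VH V : Type} (G : SimpleGraph V) (H : SimpleGraph VH)
    (S : ℕ → Prop) : Prop :=
  ∃ (f : VH ↪ V) (P : ∀ ⦃a b⦄, H.Adj a b → G.Walk (f a) (f b)),
    (∀ ⦃a b⦄ (h : H.Adj a b), (P h).IsPath) ∧
    (∀ ⦃a b⦄ (h : H.Adj a b), 1 ≤ (P h).length ∧ S ((P h).length - 1)) ∧
    (∀ ⦃a b⦄ (h : H.Adj a b), ∀ c : VH, f c ∈ (P h).support → c = a ∨ c = b) ∧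
    ∀ ⦃a b a' b'⦄ (h : H.Adj a b) (h' : H.Adj a' b'), s(a, b) ≠ s(a', b') →
      ∀ x, x ∈ (P h).support → x ∈ (P h').support →
        (x = f a ∨ x = f b) ∧ (x = f a' ∨ x = f b')

/-- `H` is an `ℓ`-shallow minor of `G`: a minor all of whose branch sets have radius
at most `ℓ`. -/
def IsShallowMinorOf {W V : Type} (H : SimpleGraph W) (G : SimpleGraph V)
    (ℓ : WithTop ℤ) : Prop :=
  ∃ B : W → Set V,
    (∀ w, (B w).Nonempty) ∧
    (∀ ⦃w w'⦄, w ≠ w' → Disjoint (B w) (B w')) ∧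
    (∀ w, (G.induce (B w)).Connected) ∧
    (∀ w, ∃ v : B w, ∀ u : B w, (((G.induce (B w)).dist v u : ℤ) : WithTop ℤ) ≤ ℓ) ∧
    ∀ ⦃w w'⦄, H.Adj w w' → ∃ u ∈ B w, ∃ x ∈ B w', G.Adj u x

end

/-- Auxiliary: base-`r` encoding `i*r + j` with `j < r` is injective in both arguments. -/
lemma encode_inj_aux {r i1 i2 j1 j2 : ℕ} (h1 : j1 < r) (h2 : j2 < r)
    (h : i1 * r + j1 = i2 * r + j2) : i1 = i2 ∧ j1 = j2 := by
  have hr : 0 < r := by omega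
  have e1 : ∀ i j : ℕ, j < r → (i * r + j) / r = i := by
    intro i j hj
    rw [mul_comm, Nat.mul_add_div hr, Nat.div_eq_of_lt hj, add_zero]
  have e2 : ∀ i j : ℕ, j < r → (i * r + j) % r = j := by
    intro i j hj
    rw [mul_comm, Nat.mul_add_mod, Nat.mod_eq_of_lt hj]
  constructor
  · have := e1 i1 j1 h1; rw [h, e1 i2 j2 h2] at this; omega
  · have := e2 i1 j1 h1; rw [h, e2 i2 j2 h2] at this; omega

/-- Lemma 3.3 (`I_{r-w} ∨ r^{r-w} K_{w+1}` is not `r`-choosable). -/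
theorem stmt_10 (r : ℕ) (hr : 0 < r) (w : ℕ) (hw : w ≤ r) :
    ¬ Choosable
        (gJoin (⊥ : SimpleGraph (Fin (r - w)))
          (gCopies (r ^ (r - w)) (⊤ : SimpleGraph (Fin (w + 1))))) r := by
  classical
  intro hch
  set t : ℕ := r - w with ht
  -- the list assignment
  set L : Fin t ⊕ (Fin (r ^ t) × Fin (w + 1)) → Finset ℕ := fun v =>
    match v with
    | Sum.inl i => (Finset.range r).image (fun j => (i : ℕ) * r + j)
    | Sum.inr (k, _) =>
        ((Finset.univ : Finset (Fin t)).image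
          (fun i : Fin t => (i : ℕ) * r + ((finFunctionFinEquiv.symm k) i : ℕ)))
        ∪ ((Finset.range w).image (fun j => t * r + j)) with hL
  have hcard : ∀ v, r ≤ (L v).card := by
    rintro (i | ⟨k, v⟩)
    · have : ((Finset.range r).image (fun j => (i : ℕ) * r + j)).card = r := by
        rw [Finset.card_image_of_injective _ (fun a b h => Nat.add_left_cancel h),
          Finset.card_range]
      simp only [hL]; omega
    · have hA : ((Finset.univ : Finset (Fin t)).image
          (fun i : Fin t => (i : ℕ) * r + ((finFunctionFinEquiv.symm k) i : ℕ))).card = t := by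
        rw [Finset.card_image_of_injective, Finset.card_univ, Fintype.card_fin]
        intro a b h
        exact Fin.val_injective
          (encode_inj_aux (Fin.is_lt _) (Fin.is_lt _) h).1
      have hB : ((Finset.range w).image (fun j => t * r + j)).card = w := by
        rw [Finset.card_image_of_injective _ (fun a b h => Nat.add_left_cancel h),
          Finset.card_range]
      have hdisj : Disjoint ((Finset.univ : Finset (Fin t)).image
          (fun i : Fin t => (i : ℕ) * r + ((finFunctionFinEquiv.symm k) i : ℕ)))
          ((Finset.range w).image (fun j => t * r + j)) := by
        rw [Finset.disjoint_left]
        intro a ha hb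
        simp only [Finset.mem_image, Finset.mem_univ, true_and, Finset.mem_range] at ha hb
        obtain ⟨i, hi⟩ := ha
        obtain ⟨j, hj, hj2⟩ := hb
        have hmul : ((i : ℕ) + 1) * r = (i : ℕ) * r + r := by ring
        have h1 : a < ((i : ℕ) + 1) * r := by
          have := ((finFunctionFinEquiv.symm k) i).is_lt
          omega
        have h2 : ((i : ℕ) + 1) * r ≤ t * r :=
          Nat.mul_le_mul_right r i.is_lt
        omega
      have : (L (Sum.inr (k, v))).card = t + w := by
        simp only [hL]
        rw [Finset.card_union_of_disjoint hdisj, hA, hB]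
      omega
  obtain ⟨c, hc, hadj⟩ := hch L hcard
  -- extract the chosen color indices of the independent vertices
  have h1 : ∀ i : Fin t, ∃ j : Fin r, c (Sum.inl i) = (i : ℕ) * r + (j : ℕ) := by
    intro i
    have := hc (Sum.inl i)
    simp only [hL, Finset.mem_image, Finset.mem_range] at this
    obtain ⟨j, hj, hj2⟩ := this
    exact ⟨⟨j, hj⟩, hj2.symm⟩
  choose g hg using h1
  set k : Fin (r ^ t) := finFunctionFinEquiv g with hk
  have hsymm : finFunctionFinEquiv.symm k = g := Equiv.symm_apply_apply _ _
  -- every vertex of the bad clique must be colored with one of the `w` extra colors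
  have h2 : ∀ v : Fin (w + 1), ∃ j : Fin w, c (Sum.inr (k, v)) = t * r + (j : ℕ) := by
    intro v
    have hmem := hc (Sum.inr (k, v))
    simp only [hL, Finset.mem_union, Finset.mem_image, Finset.mem_univ, true_and,
      Finset.mem_range] at hmem
    rcases hmem with ⟨i, hi⟩ | ⟨j, hj, hj2⟩
    · exfalso
      rw [hsymm, ← hg i] at hi
      have hadj' : (gJoin (⊥ : SimpleGraph (Fin t))
          (gCopies (r ^ t) (⊤ : SimpleGraph (Fin (w + 1))))).Adj
          (Sum.inl i) (Sum.inr (k, v)) := trivial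
      exact hadj hadj' hi
    · exact ⟨⟨j, hj⟩, hj2.symm⟩
  choose q hq using h2
  -- `q` is injective, giving an injection `Fin (w+1) ↪ Fin w`, contradiction
  have hqinj : Function.Injective q := by
    intro v v' hvv'
    by_contra hne
    have hadj' : (gJoin (⊥ : SimpleGraph (Fin t))
        (gCopies (r ^ t) (⊤ : SimpleGraph (Fin (w + 1))))).Adj
        (Sum.inr (k, v)) (Sum.inr (k, v')) := by
      refine ⟨rfl, ?_⟩
      exact hne
    apply hadj hadj'
    rw [hq v, hq v', hvv']
  have := Fintype.card_le_of_injective q hqinj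
  simp only [Fintype.card_fin] at this
  omega
end

section
/- Let r be a positive integer and let H be a finite simple graph that is not a subgraph of K_r ∨ I_t for any positive integer t. Then for every integer s with s ≥ r, the complete bipartite graph K_{r,s} has no H-minor; that is, {K_{r,s} : s ≥ r} ⊆ M(H). -/
open Filter

/-- Lemma 6.1 (`K_{r,s}` is `H`-minor-free). -/
theorem stmt_18 (r : ℕ) (hr : 0 < r) {VH : Type} [Fintype VH] (H : SimpleGraph VH)
    (hH : ∀ t : ℕ, 0 < t →
      ¬ IsSubCopyOf H (gJoin (⊤ : SimpleGraph (Fin r)) (⊥ : SimpleGraph (Fin t)))) :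
    ∀ s : ℕ, r ≤ s →
      ¬ IsMinorOf H (gJoin (⊥ : SimpleGraph (Fin r)) (⊥ : SimpleGraph (Fin s))) := by
  intro s hs
  rintro ⟨B, hne, hdisj, hconn, hadj⟩
  classical
  set G := gJoin (⊥ : SimpleGraph (Fin r)) (⊥ : SimpleGraph (Fin s)) with hGdef
  -- any branch set avoiding the left side is a singleton on the right
  have key : ∀ w : VH, (¬ ∃ i : Fin r, Sum.inl i ∈ B w) →
      ∃ j : Fin s, B w = {Sum.inr j} := by
    intro w hw
    obtain ⟨u, hu⟩ := hne w
    obtain ⟨j, rfl⟩ : ∃ j : Fin s, u = Sum.inr j := by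
      rcases u with i | j
      · exact absurd ⟨i, hu⟩ hw
      · exact ⟨j, rfl⟩
    refine ⟨j, ?_⟩
    have hbot : (G.induce (B w)) = ⊥ := by
      ext a b
      simp only [SimpleGraph.comap_adj, SimpleGraph.bot_adj, iff_false]
      obtain ⟨ja, hja⟩ : ∃ ja : Fin s, (a : Fin r ⊕ Fin s) = Sum.inr ja := by
        rcases ha : (a : Fin r ⊕ Fin s) with i | jj
        · exact absurd ⟨i, ha ▸ a.2⟩ hw
        · exact ⟨jj, rfl⟩
      obtain ⟨jb, hjb⟩ : ∃ jb : Fin s, (b : Fin r ⊕ Fin s) = Sum.inr jb := by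
        rcases hb : (b : Fin r ⊕ Fin s) with i | jj
        · exact absurd ⟨i, hb ▸ b.2⟩ hw
        · exact ⟨jj, rfl⟩
      intro hadj'
      have hadj2 : G.Adj (↑a) (↑b) := hadj'
      rw [hja, hjb] at hadj2
      exact hadj2
    apply Set.eq_singleton_iff_unique_mem.mpr
    refine ⟨hu, fun v hv => ?_⟩
    have hreach := (hconn w).preconnected ⟨v, hv⟩ ⟨Sum.inr j, hu⟩
    rw [hbot, SimpleGraph.reachable_bot] at hreach
    exact congrArg Subtype.val hreach
  have exJ : ∀ w : VH, (¬ ∃ i : Fin r, Sum.inl i ∈ B w) →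
      ∃ j : Fin s, Sum.inr j ∈ B w := by
    intro w hw
    obtain ⟨j, hj⟩ := key w hw
    exact ⟨j, by rw [hj]; exact rfl⟩
  let f : VH → Fin r ⊕ Fin s := fun w =>
    if h : ∃ i : Fin r, Sum.inl i ∈ B w then Sum.inl h.choose
    else Sum.inr (exJ w h).choose
  have hmem : ∀ w : VH, f w ∈ B w := by
    intro w
    by_cases h : ∃ i : Fin r, Sum.inl i ∈ B w
    · simpa only [f, dif_pos h] using h.choose_spec
    · simpa only [f, dif_neg h] using (exJ w h).choose_spec
  have finj : Function.Injective f := by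
    intro w w' hff
    by_contra hne'
    exact (hdisj hne').ne_of_mem (hmem w) (hmem w') hff
  have hspos : 0 < s := lt_of_lt_of_le hr hs
  refine hH s hspos ⟨⟨f, finj⟩, ?_⟩
  intro w w' hadjH
  have hww' : w ≠ w' := hadjH.ne
  show (gJoin (⊤ : SimpleGraph (Fin r)) (⊥ : SimpleGraph (Fin s))).Adj (f w) (f w')
  by_cases h : ∃ i : Fin r, Sum.inl i ∈ B w <;>
    by_cases h' : ∃ i : Fin r, Sum.inl i ∈ B w'
  · have e1 : f w = Sum.inl h.choose := dif_pos h
    have e2 : f w' = Sum.inl h'.choose := dif_pos h'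
    rw [e1, e2]
    have hneq : h.choose ≠ h'.choose := by
      intro heq
      exact hww' (finj (by rw [e1, e2, heq]))
    exact hneq
  · have e1 : f w = Sum.inl h.choose := dif_pos h
    have e2 : f w' = Sum.inr (exJ w' h').choose := dif_neg h'
    rw [e1, e2]; trivial
  · have e1 : f w = Sum.inr (exJ w h).choose := dif_neg h
    have e2 : f w' = Sum.inl h'.choose := dif_pos h'
    rw [e1, e2]; trivial
  · exfalso
    obtain ⟨j, hj⟩ := key w h
    obtain ⟨j', hj'⟩ := key w' h'
    obtain ⟨u, hu, x, hx, huxadj⟩ := hadj hadjH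
    rw [hj] at hu
    rw [hj'] at hx
    rw [Set.mem_singleton_iff] at hu hx
    subst hu; subst hx
    exact huxadj
end
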